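/- Let d > 2 and κ > 0. Set φ(r) = r√(1+κ²r²) for r > 0 and h(r) = (φ'(r)/r)^{d-1} φ''(r). Then for every δ ∈ [0, (d-2)/2] there exists a constant C > 0, depending only on d and κ, such that for all r > 0, h(r)^{-1/2} ≤ C r^δ. -/

import Mathlib

set_option maxHeartbeats 1000000


noncomputable section

/-- The phase `φ(r) = r √(1 + κ² r²)`. -/
def phiK (κ : ℝ) : ℝ → ℝ := fun r => r * Real.sqrt (1 + κ ^ 2 * r ^ 2)

/-- `h(r) = (φ'(r)/r)^{d-1} φ''(r)`, the determinant of the Hessian of the radial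
function `ξ ↦ φ(|ξ|)` on `ℝ^d`, for `φ = phiK κ`. -/
def hK (d : ℕ) (κ : ℝ) (r : ℝ) : ℝ :=
  (deriv (phiK κ) r / r) ^ (d - 1) * deriv (deriv (phiK κ)) r

lemma sqrt_aux_pos (κ r : ℝ) : 0 < 1 + κ ^ 2 * r ^ 2 := by positivity

lemma hasDerivAt_sqrt_aux (κ r : ℝ) :
    HasDerivAt (fun x => Real.sqrt (1 + κ ^ 2 * x ^ 2))
      (κ ^ 2 * r / Real.sqrt (1 + κ ^ 2 * r ^ 2)) r := by
  have hpos := sqrt_aux_pos κ r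
  have h1 : HasDerivAt (fun x : ℝ => 1 + κ ^ 2 * x ^ 2) (κ ^ 2 * (2 * r)) r := by
    simpa using ((hasDerivAt_pow 2 r).const_mul (κ ^ 2)).const_add 1
  have := h1.sqrt hpos.ne'
  convert this using 1
  have hs : Real.sqrt (1 + κ ^ 2 * r ^ 2) ≠ 0 := (Real.sqrt_pos.mpr hpos).ne'
  field_simp

lemma hasDerivAt_phiK (κ r : ℝ) :
    HasDerivAt (phiK κ)
      ((1 + 2 * κ ^ 2 * r ^ 2) / Real.sqrt (1 + κ ^ 2 * r ^ 2)) r := by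
  have hpos := sqrt_aux_pos κ r
  have hs0 : (0:ℝ) < Real.sqrt (1 + κ ^ 2 * r ^ 2) := Real.sqrt_pos.mpr hpos
  have hs2 : Real.sqrt (1 + κ ^ 2 * r ^ 2) ^ 2 = 1 + κ ^ 2 * r ^ 2 :=
    Real.sq_sqrt hpos.le
  have := (hasDerivAt_id r).mul (hasDerivAt_sqrt_aux κ r)
  refine this.congr_deriv ?_
  simp only [id_eq]
  field_simp
  nlinarith [hs2]

lemma deriv_phiK (κ r : ℝ) :
    deriv (phiK κ) r = (1 + 2 * κ ^ 2 * r ^ 2) / Real.sqrt (1 + κ ^ 2 * r ^ 2) :=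
  (hasDerivAt_phiK κ r).deriv

lemma deriv2_phiK (κ r : ℝ) :
    deriv (deriv (phiK κ)) r
      = κ ^ 2 * r * (3 + 2 * κ ^ 2 * r ^ 2) / Real.sqrt (1 + κ ^ 2 * r ^ 2) ^ 3 := by
  have hfn : deriv (phiK κ) = fun x => (1 + 2 * κ ^ 2 * x ^ 2) / Real.sqrt (1 + κ ^ 2 * x ^ 2) :=
    funext fun x => deriv_phiK κ x
  rw [hfn]
  have hpos := sqrt_aux_pos κ r
  have hs0 : (0:ℝ) < Real.sqrt (1 + κ ^ 2 * r ^ 2) := Real.sqrt_pos.mpr hpos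
  have hs2 : Real.sqrt (1 + κ ^ 2 * r ^ 2) ^ 2 = 1 + κ ^ 2 * r ^ 2 :=
    Real.sq_sqrt hpos.le
  have hnum : HasDerivAt (fun x : ℝ => 1 + 2 * κ ^ 2 * x ^ 2) (2 * κ ^ 2 * (2 * r)) r := by
    simpa using ((hasDerivAt_pow 2 r).const_mul (2 * κ ^ 2)).const_add 1
  have hdiv := hnum.div (hasDerivAt_sqrt_aux κ r) hs0.ne'
  rw [show deriv (fun x => (1 + 2 * κ ^ 2 * x ^ 2) / Real.sqrt (1 + κ ^ 2 * x ^ 2)) r = _ from hdiv.deriv]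
  field_simp
  linear_combination (4 * κ ^ 2 * r) * hs2

lemma hK_eq (d : ℕ) (κ r : ℝ) :
    hK d κ r = ((1 + 2 * κ ^ 2 * r ^ 2) / (Real.sqrt (1 + κ ^ 2 * r ^ 2) * r)) ^ (d - 1)
      * (κ ^ 2 * r * (3 + 2 * κ ^ 2 * r ^ 2) / Real.sqrt (1 + κ ^ 2 * r ^ 2) ^ 3) := by
  rw [hK, deriv_phiK, deriv2_phiK, div_div]

/-- Uniform lower bound `hK d κ r ≥ c r^{-2δ}`. -/
lemma hK_lower (d : ℕ) (hd : 2 < d) (κ : ℝ) (hκ : 0 < κ)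
    (δ : ℝ) (hδ0 : 0 ≤ δ) (hδ1 : δ ≤ (((d : ℝ)) - 2) / 2) :
    ∃ c > 0, ∀ r > 0, c * r ^ (-(2 * δ)) ≤ hK d κ r := by
  obtain ⟨e, rfl⟩ : ∃ e, d = e + 3 := ⟨d - 3, by omega⟩
  set S : ℝ := Real.sqrt (1 + κ ^ 2) with hS
  have hS0 : 0 < S := Real.sqrt_pos.mpr (by positivity)
  set c₁ : ℝ := 3 * κ ^ 2 / S ^ (e + 5) with hc₁
  set c₂ : ℝ := (2 * κ ^ 2 / S) ^ (e + 2) * (2 * κ ^ 4 / S ^ 3) with hc₂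
  have hc₁0 : 0 < c₁ := by positivity
  have hc₂0 : 0 < c₂ := by positivity
  refine ⟨min c₁ c₂, lt_min hc₁0 hc₂0, fun r hr => ?_⟩
  have hr0 : (0:ℝ) < r := hr
  have hpos := sqrt_aux_pos κ r
  have hs0 : (0:ℝ) < Real.sqrt (1 + κ ^ 2 * r ^ 2) := Real.sqrt_pos.mpr hpos
  have hs2 : Real.sqrt (1 + κ ^ 2 * r ^ 2) ^ 2 = 1 + κ ^ 2 * r ^ 2 :=
    Real.sq_sqrt hpos.le
  rw [hK_eq]
  have hd1 : e + 3 - 1 = e + 2 := rfl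
  rw [hd1]
  rcases le_total r 1 with h1 | h1
  · -- small r: sqrt(1+κ²r²) ≤ S
    have hsS : Real.sqrt (1 + κ ^ 2 * r ^ 2) ≤ S :=
      Real.sqrt_le_sqrt (by nlinarith [pow_le_one₀ hr0.le h1 (n := 2), sq_nonneg κ])
    -- base bound
    have hbase : 1 / (S * r) ≤ (1 + 2 * κ ^ 2 * r ^ 2) / (Real.sqrt (1 + κ ^ 2 * r ^ 2) * r) := by
      apply div_le_div₀ (by positivity) (by nlinarith [sq_nonneg (κ * r)]) (by positivity)
      exact mul_le_mul_of_nonneg_right hsS hr0.le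
    have hfac : 3 * κ ^ 2 * r / S ^ 3
        ≤ κ ^ 2 * r * (3 + 2 * κ ^ 2 * r ^ 2) / Real.sqrt (1 + κ ^ 2 * r ^ 2) ^ 3 := by
      apply div_le_div₀ (by positivity)
        (by nlinarith [mul_nonneg (mul_nonneg (sq_nonneg κ) (sq_nonneg κ)) (pow_nonneg hr0.le 3)]) (by positivity)
      exact pow_le_pow_left₀ hs0.le hsS 3
    have hpow : (1 / (S * r)) ^ (e + 2)
        ≤ ((1 + 2 * κ ^ 2 * r ^ 2) / (Real.sqrt (1 + κ ^ 2 * r ^ 2) * r)) ^ (e + 2) :=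
      pow_le_pow_left₀ (by positivity) hbase _
    have hmain : (1 / (S * r)) ^ (e + 2) * (3 * κ ^ 2 * r / S ^ 3)
        ≤ ((1 + 2 * κ ^ 2 * r ^ 2) / (Real.sqrt (1 + κ ^ 2 * r ^ 2) * r)) ^ (e + 2)
          * (κ ^ 2 * r * (3 + 2 * κ ^ 2 * r ^ 2) / Real.sqrt (1 + κ ^ 2 * r ^ 2) ^ 3) := by
      apply mul_le_mul hpow hfac (by positivity) (by positivity)
    refine le_trans ?_ hmain
    -- min c₁ c₂ * r^(-2δ) ≤ c₁ * r^(-(e+1)) = (1/(Sr))^(e+2) * (3κ²r/S³)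
    have hrexp : r ^ (-(2 * δ)) ≤ r ^ (-((e:ℝ) + 1)) := by
      apply Real.rpow_le_rpow_of_exponent_ge hr0 h1
      push_cast at hδ1 ⊢
      linarith
    have hreq : r ^ (-((e:ℝ) + 1)) = 1 / r ^ (e + 1) := by
      rw [Real.rpow_neg hr0.le, one_div]
      congr 1
      rw [← Real.rpow_natCast r (e + 1)]
      push_cast
      ring_nf
    calc min c₁ c₂ * r ^ (-(2 * δ)) ≤ c₁ * r ^ (-((e:ℝ) + 1)) := by
          apply mul_le_mul (min_le_left _ _) hrexp (Real.rpow_nonneg hr0.le _) hc₁0.le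
      _ = (1 / (S * r)) ^ (e + 2) * (3 * κ ^ 2 * r / S ^ 3) := by
          rw [hreq, hc₁]
          rw [div_pow, one_pow, mul_pow]
          field_simp
          ring
  · -- large r: sqrt(1+κ²r²) ≤ S r
    have hsS : Real.sqrt (1 + κ ^ 2 * r ^ 2) ≤ S * r := by
      have h2 : Real.sqrt (1 + κ ^ 2 * r ^ 2) ≤ Real.sqrt ((1 + κ ^ 2) * r ^ 2) :=
        Real.sqrt_le_sqrt (by nlinarith [sq_nonneg (r - 1), sq_nonneg κ])
      rwa [Real.sqrt_mul (by positivity), Real.sqrt_sq hr0.le] at h2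
    have hbase : 2 * κ ^ 2 / S ≤ (1 + 2 * κ ^ 2 * r ^ 2) / (Real.sqrt (1 + κ ^ 2 * r ^ 2) * r) := by
      rw [div_le_div_iff₀ hS0 (by positivity)]
      have hsr : Real.sqrt (1 + κ ^ 2 * r ^ 2) * r ≤ S * r ^ 2 := by nlinarith
      nlinarith [mul_le_mul_of_nonneg_left hsr (by positivity : (0:ℝ) ≤ 2 * κ ^ 2),
        mul_nonneg (mul_nonneg (by norm_num : (0:ℝ) ≤ 2) (sq_nonneg (κ * r))) hS0.le]
    have hfac : 2 * κ ^ 4 / S ^ 3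
        ≤ κ ^ 2 * r * (3 + 2 * κ ^ 2 * r ^ 2) / Real.sqrt (1 + κ ^ 2 * r ^ 2) ^ 3 := by
      have heq : 2 * κ ^ 4 / S ^ 3 = 2 * κ ^ 4 * r ^ 3 / (S ^ 3 * r ^ 3) := by
        field_simp
      rw [heq]
      have h3 : Real.sqrt (1 + κ ^ 2 * r ^ 2) ^ 3 ≤ S ^ 3 * r ^ 3 := by
        calc Real.sqrt (1 + κ ^ 2 * r ^ 2) ^ 3 ≤ (S * r) ^ 3 :=
              pow_le_pow_left₀ hs0.le hsS 3
          _ = S ^ 3 * r ^ 3 := by ring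
      apply div_le_div₀ (by positivity)
        (by nlinarith [mul_nonneg (sq_nonneg κ) hr0.le]) (by positivity) h3
    have hpow : (2 * κ ^ 2 / S) ^ (e + 2)
        ≤ ((1 + 2 * κ ^ 2 * r ^ 2) / (Real.sqrt (1 + κ ^ 2 * r ^ 2) * r)) ^ (e + 2) :=
      pow_le_pow_left₀ (by positivity) hbase _
    have hmain : c₂ ≤ ((1 + 2 * κ ^ 2 * r ^ 2) / (Real.sqrt (1 + κ ^ 2 * r ^ 2) * r)) ^ (e + 2)
          * (κ ^ 2 * r * (3 + 2 * κ ^ 2 * r ^ 2) / Real.sqrt (1 + κ ^ 2 * r ^ 2) ^ 3) := by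
      rw [hc₂]
      exact mul_le_mul hpow hfac (by positivity) (by positivity)
    refine le_trans ?_ hmain
    have : r ^ (-(2 * δ)) ≤ 1 :=
      Real.rpow_le_one_of_one_le_of_nonpos h1 (by linarith)
    calc min c₁ c₂ * r ^ (-(2 * δ)) ≤ c₂ * 1 := by
          apply mul_le_mul (min_le_right _ _) this (Real.rpow_nonneg hr0.le _) hc₂0.le
      _ = c₂ := mul_one _

/-- **Regularizing effect at low frequencies (`d > 2`).** Let `d > 2`, `κ > 0`,
`φ(r) = r√(1+κ²r²)` and `h(r) = (φ'(r)/r)^{d-1} φ''(r)`. For every `δ ∈ [0, (d-2)/2]` there is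
a constant `C > 0`, depending only on `d` and `κ`, such that `h(r)^{-1/2} ≤ C r^δ` for all
`r > 0`. -/
theorem hK_regularizing (d : ℕ) (hd : 2 < d) (κ : ℝ) (hκ : 0 < κ)
    (δ : ℝ) (hδ : δ ∈ Set.Icc (0 : ℝ) (((d : ℝ) - 2) / 2)) :
    ∃ C > 0, ∀ r > 0, (hK d κ r) ^ (-(1 : ℝ) / 2) ≤ C * r ^ δ := by
  obtain ⟨hδ0, hδ1⟩ := hδ
  obtain ⟨c, hc0, hc⟩ := hK_lower d hd κ hκ δ hδ0 hδ1
  refine ⟨c ^ (-(1:ℝ)/2), Real.rpow_pos_of_pos hc0 _, fun r hr => ?_⟩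
  have hlo := hc r hr
  have hpos : (0:ℝ) < c * r ^ (-(2 * δ)) := by
    exact mul_pos hc0 (Real.rpow_pos_of_pos hr _)
  have hmono : (hK d κ r) ^ (-(1:ℝ)/2) ≤ (c * r ^ (-(2 * δ))) ^ (-(1:ℝ)/2) :=
    Real.rpow_le_rpow_of_nonpos hpos hlo (by norm_num)
  refine hmono.trans_eq ?_
  rw [Real.mul_rpow hc0.le (Real.rpow_nonneg hr.le _), ← Real.rpow_mul hr.le]
  congr 1
  ring
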